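/- If (π₁,π₂) is an optimal solution of the CT-Constrained QoS Max-Survivability problem with QoS bound B, then every critical link (edge common to both paths) lies on every weight-shortest path from s to t. -/

import Mathlib

/-- A path from `s` to `t`, represented as a list of directed edges chained
from `s` to `t`. -/
def IsPathFrom {V : Type*} (s t : V) : List (V × V) → Prop
  | [] => s = t
  | (a, b) :: rest => a = s ∧ IsPathFrom b t rest

namespace CTAux

set_option linter.unusedSectionVars false

variable {V : Type*} [DecidableEq V]

/-- Weight of an edge list. -/
def Wt (w : V × V → ℝ) (l : List (V × V)) : ℝ := (l.map w).sum

@[simp] lemma Wt_nil (w : V × V → ℝ) : Wt w ([] : List (V × V)) = 0 := rfl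

@[simp] lemma Wt_cons (w : V × V → ℝ) (x : V × V) (l : List (V × V)) :
    Wt w (x :: l) = w x + Wt w l := by simp [Wt]

@[simp] lemma Wt_append (w : V × V → ℝ) (l₁ l₂ : List (V × V)) :
    Wt w (l₁ ++ l₂) = Wt w l₁ + Wt w l₂ := by simp [Wt]

lemma Wt_nonneg {w : V × V → ℝ} (hw : ∀ e, 0 < w e) (l : List (V × V)) :
    0 ≤ Wt w l := by
  induction l with
  | nil => simp
  | cons x l ih => simpa using add_nonneg (hw x).le ih

lemma path_cons {s t : V} {x : V × V} {l : List (V × V)} :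
    IsPathFrom s t (x :: l) ↔ x.1 = s ∧ IsPathFrom x.2 t l := by
  cases x; rfl

lemma path_append {s m t : V} {P Q : List (V × V)}
    (hP : IsPathFrom s m P) (hQ : IsPathFrom m t Q) :
    IsPathFrom s t (P ++ Q) := by
  induction P generalizing s with
  | nil =>
    have hsm : s = m := hP
    subst hsm; exact hQ
  | cons x P ih =>
    rw [path_cons] at hP
    rw [List.cons_append, path_cons]
    exact ⟨hP.1, ih hP.2⟩

lemma path_split {s t : V} {P Q : List (V × V)}
    (h : IsPathFrom s t (P ++ Q)) :
    ∃ m, IsPathFrom s m P ∧ IsPathFrom m t Q := by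
  induction P generalizing s with
  | nil => exact ⟨s, rfl, h⟩
  | cons x P ih =>
    rw [List.cons_append, path_cons] at h
    obtain ⟨m, h1, h2⟩ := ih h.2
    exact ⟨m, path_cons.mpr ⟨h.1, h1⟩, h2⟩

/-- Split a path at a distinguished edge occurrence. -/
lemma path_split_at {s t : V} {P Q : List (V × V)} {x : V × V}
    (h : IsPathFrom s t (P ++ x :: Q)) :
    IsPathFrom s x.1 P ∧ IsPathFrom x.2 t Q := by
  obtain ⟨m, h1, h2⟩ := path_split h
  rw [path_cons] at h2
  exact ⟨h2.1 ▸ h1, h2.2⟩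

end CTAux


namespace CTAux2
set_option linter.unusedSectionVars false
variable {α : Type*}

/-- Non-nodup lists contain a duplicated element with explicit decomposition. -/
lemma dup_decomp {l : List α} (h : ¬ l.Nodup) :
    ∃ (P : List α) (x : α) (M Q : List α), l = P ++ x :: (M ++ x :: Q) := by
  induction l with
  | nil => exact absurd List.nodup_nil h
  | cons a l ih =>
    by_cases ha : a ∈ l
    · obtain ⟨M, Q, rfl⟩ := List.append_of_mem ha
      exact ⟨[], a, M, Q, rfl⟩
    · have hl : ¬ l.Nodup := fun hn => h (List.nodup_cons.mpr ⟨ha, hn⟩)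
      obtain ⟨P, x, M, Q, rfl⟩ := ih hl
      exact ⟨a :: P, x, M, Q, rfl⟩

lemma decomp_unique {x : α} {P₁ Q₁ P₂ Q₂ : List α}
    (h : P₁ ++ x :: Q₁ = P₂ ++ x :: Q₂) (h₁ : x ∉ P₁) (h₂ : x ∉ P₂) :
    P₁ = P₂ ∧ Q₁ = Q₂ := by
  induction P₁ generalizing P₂ with
  | nil =>
    cases P₂ with
    | nil => simpa using h
    | cons b P₂ =>
      simp only [List.nil_append, List.cons_append, List.cons.injEq] at h
      exact absurd (h.1 ▸ List.mem_append_right P₂ (List.mem_cons_self (a := x) (l := Q₂)))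
        (by simpa [h.1] using h₂)
  | cons a P₁ ih =>
    cases P₂ with
    | nil =>
      simp only [List.cons_append, List.nil_append, List.cons.injEq] at h
      exact absurd (h.1 ▸ List.mem_append_right P₁ (List.mem_cons_self (a := x) (l := Q₁)))
        (by simpa [h.1] using h₁)
    | cons b P₂ =>
      simp only [List.cons_append, List.cons.injEq] at h
      have := ih h.2 (fun hx => h₁ (List.mem_cons_of_mem a hx))
        (fun hx => h₂ (List.mem_cons_of_mem b hx))
      exact ⟨by rw [h.1, this.1], this.2⟩

/-- In a nodup list written as `P ++ x :: Q`, basic disjointness facts. -/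
lemma nodup_parts {x : α} {P Q : List α} (h : (P ++ x :: Q).Nodup) :
    x ∉ P ∧ x ∉ Q ∧ ∀ a ∈ P, a ∉ Q := by
  rw [List.nodup_append] at h
  obtain ⟨_, hxQ, hdisj⟩ := h
  rw [List.nodup_cons] at hxQ
  refine ⟨fun hx => hdisj x hx x List.mem_cons_self rfl, hxQ.1,
    fun a ha haQ => hdisj a ha a (List.mem_cons_of_mem x haQ) rfl⟩

/-- `y` occurs strictly after `x` in `l`. -/
def AfterIn (l : List α) (x y : α) : Prop :=
  ∃ P Q, l = P ++ x :: Q ∧ y ∈ Q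

lemma afterIn_total {l : List α} {x y : α}
    (hx : x ∈ l) (hy : y ∈ l) (hxy : x ≠ y) :
    AfterIn l x y ∨ AfterIn l y x := by
  obtain ⟨P, Q, rfl⟩ := List.append_of_mem hx
  rcases List.mem_append.mp hy with hyP | hyQ
  · obtain ⟨P', Q', rfl⟩ := List.append_of_mem hyP
    exact Or.inr ⟨P', Q' ++ x :: Q, by simp, by simp [hxy.symm]⟩
  · rcases List.mem_cons.mp hyQ with h | h
    · exact absurd h.symm hxy
    · exact Or.inl ⟨P, Q, rfl, h⟩

lemma afterIn_suffix {l : List α} {x y : α} {P Q : List α}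
    (hnd : l.Nodup) (h : AfterIn l x y) (hdec : l = P ++ x :: Q) : y ∈ Q := by
  obtain ⟨P', Q', hdec', hy⟩ := h
  have hnd' := hdec ▸ hnd
  have hnd'' := hdec' ▸ hnd
  have h1 := (nodup_parts hnd').1
  have h2 := (nodup_parts hnd'').1
  obtain ⟨-, rfl⟩ := decomp_unique (hdec ▸ hdec' : P ++ x :: Q = P' ++ x :: Q') h1 h2
  exact hy

lemma afterIn_trans {l : List α} {x y z : α}
    (hnd : l.Nodup) (h1 : AfterIn l x y) (h2 : AfterIn l y z) : AfterIn l x z := by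
  obtain ⟨P, Q, rfl, hy⟩ := h1
  obtain ⟨A, B, rfl⟩ := List.append_of_mem hy
  have hzB : z ∈ B := afterIn_suffix hnd h2
    (by rw [List.append_assoc, List.cons_append] : P ++ x :: (A ++ y :: B) = (P ++ x :: A) ++ y :: B)
  exact ⟨P, A ++ y :: B, rfl, List.mem_append_right _ (List.mem_cons_of_mem _ hzB)⟩

lemma afterIn_asymm {l : List α} {x y : α}
    (hnd : l.Nodup) (h1 : AfterIn l x y) (h2 : AfterIn l y x) : False := by
  obtain ⟨P, Q, rfl, hy⟩ := h1
  have hx : x ∈ Q := by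
    obtain ⟨P', Q', hdec', hx'⟩ := h2
    obtain ⟨PP, QQ, rfl⟩ := List.append_of_mem hy
    have : P ++ x :: (PP ++ y :: QQ) = (P ++ x :: PP) ++ y :: QQ := by simp
    have hyy := afterIn_suffix hnd (⟨P', Q', hdec', hx'⟩ : AfterIn _ y x) this
    exact List.mem_append_right _ (List.mem_cons_of_mem y hyy)
  exact (nodup_parts hnd).2.1 hx |>.elim

open Classical in
lemma last_bad {bad : α → Prop} :
    ∀ l : List α, (∃ x ∈ l, bad x) →
      ∃ U c R, l = U ++ c :: R ∧ bad c ∧ ∀ x ∈ R, ¬ bad x := by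
  intro l
  induction l with
  | nil => rintro ⟨x, hx, -⟩; exact absurd hx (List.not_mem_nil)
  | cons a l ih =>
    intro hex
    by_cases hl : ∃ x ∈ l, bad x
    · obtain ⟨U, c, R, rfl, hc, hR⟩ := ih hl
      exact ⟨a :: U, c, R, rfl, hc, hR⟩
    · obtain ⟨x, hx, hbx⟩ := hex
      have hxa : x = a := by
        rcases List.mem_cons.mp hx with h | h
        · exact h
        · exact absurd ⟨x, h, hbx⟩ hl
      push_neg at hl
      exact ⟨[], a, l, rfl, hxa ▸ hbx, hl⟩

open Classical in
lemma scan_adjacent {bad isA isC : α → Prop} :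
    ∀ l : List α, (∃ z ∈ l, bad z ∧ isC z) → (∀ x, bad x → isA x ∨ isC x) →
      (∃ W₁ y M z W₂, l = W₁ ++ y :: (M ++ z :: W₂) ∧ bad y ∧ isA y ∧ bad z ∧ isC z ∧
        ∀ x ∈ M, ¬ bad x)
      ∨ (∃ W₁ z W₂, l = W₁ ++ z :: W₂ ∧ bad z ∧ isC z ∧ ∀ x ∈ W₁, ¬ bad x) := by
  intro l
  induction l with
  | nil => rintro ⟨z, hz, -⟩ _; exact absurd hz (List.not_mem_nil)
  | cons a l ih =>
    intro hex hcls
    by_cases hba : bad a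
    · by_cases hCa : isC a
      · exact Or.inr ⟨[], a, l, rfl, hba, hCa, by simp⟩
      · have hAa : isA a := (hcls a hba).resolve_right hCa
        have hzl : ∃ z ∈ l, bad z ∧ isC z := by
          obtain ⟨z, hz, hbz, hCz⟩ := hex
          rcases List.mem_cons.mp hz with h | h
          · exact absurd (h ▸ hCz) hCa
          · exact ⟨z, h, hbz, hCz⟩
        rcases ih hzl hcls with ⟨W₁, y, M, z, W₂, rfl, h1, h2, h3, h4, h5⟩ |
          ⟨W₁, z, W₂, rfl, h1, h2, h3⟩
        · exact Or.inl ⟨a :: W₁, y, M, z, W₂, rfl, h1, h2, h3, h4, h5⟩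
        · exact Or.inl ⟨[], a, W₁, z, W₂, rfl, hba, hAa, h1, h2, h3⟩
    · have hzl : ∃ z ∈ l, bad z ∧ isC z := by
        obtain ⟨z, hz, hbz, hCz⟩ := hex
        rcases List.mem_cons.mp hz with h | h
        · exact absurd (h ▸ hbz) hba
        · exact ⟨z, h, hbz, hCz⟩
      rcases ih hzl hcls with ⟨W₁, y, M, z, W₂, rfl, h1, h2, h3, h4, h5⟩ |
        ⟨W₁, z, W₂, rfl, h1, h2, h3⟩
      · exact Or.inl ⟨a :: W₁, y, M, z, W₂, rfl, h1, h2, h3, h4, h5⟩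
      · exact Or.inr ⟨a :: W₁, z, W₂, rfl, h1, h2, by
          intro x hx
          rcases List.mem_cons.mp hx with h | h
          · exact h ▸ hba
          · exact h3 x h⟩

end CTAux2

namespace CTAux
set_option linter.unusedSectionVars false
set_option maxHeartbeats 1000000

open CTAux2

variable {V : Type*} [DecidableEq V]

/-- The witness goal: a feasible pair sharing only common non-`e` edges. -/
def Goal (w : V × V → ℝ) (E : Finset (V × V)) (s t : V) (e : V × V)
    (ρ₁ ρ₂ : List (V × V)) : Prop :=
  ∃ τ₁ τ₂, IsPathFrom s t τ₁ ∧ IsPathFrom s t τ₂ ∧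
    (∀ x ∈ τ₁, x ∈ E) ∧ (∀ x ∈ τ₂, x ∈ E) ∧
    Wt w τ₁ + Wt w τ₂ ≤ Wt w ρ₁ + Wt w ρ₂ ∧
    ∀ x, x ∈ τ₁ → x ∈ τ₂ → x ∈ ρ₁ ∧ x ∈ ρ₂ ∧ x ≠ e

lemma Goal.symm {w : V × V → ℝ} {E : Finset (V × V)} {s t : V} {e : V × V}
    {ρ₁ ρ₂ : List (V × V)} (h : Goal w E s t e ρ₂ ρ₁) : Goal w E s t e ρ₁ ρ₂ := by
  obtain ⟨τ₁, τ₂, h1, h2, h3, h4, h5, h6⟩ := h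
  exact ⟨τ₁, τ₂, h1, h2, h3, h4, by linarith, fun x a b =>
    ⟨(h6 x a b).2.1, (h6 x a b).1, (h6 x a b).2.2⟩⟩

section Witnesses

variable {w : V × V → ℝ} {E : Finset (V × V)} {s t : V} {e : V × V} {σ : List (V × V)}

/-- Witness: `(σ, ρα)` when every `σ`-edge of `ρα` is shared. -/
lemma witness_sigma (hw : ∀ x, 0 < w x)
    (hσ : IsPathFrom s t σ) (hσE : ∀ x ∈ σ, x ∈ E)
    (hmin : ∀ τ, IsPathFrom s t τ → (∀ x ∈ τ, x ∈ E) → Wt w σ ≤ Wt w τ)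
    (heσ : e ∉ σ) {ρα ρβ : List (V × V)}
    (hα : IsPathFrom s t ρα) (hβ : IsPathFrom s t ρβ)
    (hαE : ∀ x ∈ ρα, x ∈ E) (hβE : ∀ x ∈ ρβ, x ∈ E)
    (hsub : ∀ x ∈ σ, x ∈ ρα → x ∈ ρβ) :
    Goal w E s t e ρα ρβ := by
  refine ⟨σ, ρα, hσ, hα, hσE, hαE, ?_, ?_⟩
  · have := hmin ρβ hβ hβE
    linarith
  · intro x hxσ hxα
    exact ⟨hxα, hsub x hxσ hxα, fun h => heσ (h ▸ hxσ)⟩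

/-- Witness W4: the σ-first bad edge `b` lies after `e` in its owner `ρα`. -/
lemma witness_W4 (hw : ∀ x, 0 < w x)
    (hσ : IsPathFrom s t σ) (hσE : ∀ x ∈ σ, x ∈ E)
    (hmin : ∀ τ, IsPathFrom s t τ → (∀ x ∈ τ, x ∈ E) → Wt w σ ≤ Wt w τ)
    (heσ : e ∉ σ) {ρα ρβ : List (V × V)} {b : V × V} {U R P Q : List (V × V)}
    (hα : IsPathFrom s t ρα) (hβ : IsPathFrom s t ρβ)
    (hαE : ∀ x ∈ ρα, x ∈ E) (hβE : ∀ x ∈ ρβ, x ∈ E)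
    (hαnd : ρα.Nodup)
    (hσdec : σ = U ++ b :: R) (hU : ∀ x ∈ U, x ∈ ρβ → x ∈ ρα)
    (hbβ : b ∉ ρβ)
    (hαdec : ρα = P ++ b :: Q) (heP : e ∈ P) :
    Goal w E s t e ρα ρβ := by
  have hσsp := path_split_at (hσdec ▸ hσ)
  have hαsp := path_split_at (hαdec ▸ hα)
  -- τ₁ = U ++ b :: Q
  refine ⟨U ++ b :: Q, ρβ, path_append hσsp.1 (path_cons.mpr ⟨rfl, hαsp.2⟩), hβ, ?_, hβE, ?_, ?_⟩
  · intro x hx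
    rcases List.mem_append.mp hx with h | h
    · exact hσE x (hσdec ▸ List.mem_append_left _ h)
    · exact hαE x (hαdec ▸ List.mem_append_right _ h)
  · -- weight
    have hcomp : Wt w σ ≤ Wt w (P ++ b :: R) := by
      refine hmin _ (path_append hαsp.1 (path_cons.mpr ⟨rfl, hσsp.2⟩)) ?_
      intro x hx
      rcases List.mem_append.mp hx with h | h
      · exact hαE x (hαdec ▸ List.mem_append_left _ h)
      · exact hσE x (hσdec ▸ List.mem_append_right _ h)
    rw [hσdec] at hcomp
    rw [hαdec]
    simp only [Wt_append, Wt_cons] at hcomp ⊢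
    have hβn := Wt_nonneg hw ρβ
    linarith
  · -- intersection
    intro x hx hxβ
    have hne : x ≠ e := by
      rintro rfl
      rcases List.mem_append.mp hx with h | h
      · exact heσ (hσdec ▸ List.mem_append_left _ h)
      · rcases List.mem_cons.mp h with h | h
        · subst h
          exact heσ (hσdec ▸ List.mem_append_right _ (List.mem_cons_self (l := R)))
        · exact (nodup_parts (hαdec ▸ hαnd)).2.2 _ heP h
    rcases List.mem_append.mp hx with h | h
    · exact ⟨hU x h hxβ, hxβ, hne⟩
    · rcases List.mem_cons.mp h with h | h
      · exact absurd (h ▸ hxβ) hbβ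
      · exact ⟨hαdec ▸ List.mem_append_right _ (List.mem_cons_of_mem b h), hxβ, hne⟩

/-- Witness W5: the σ-last bad edge `c` lies before `e` in its owner `ρα`. -/
lemma witness_W5 (hw : ∀ x, 0 < w x)
    (hσ : IsPathFrom s t σ) (hσE : ∀ x ∈ σ, x ∈ E)
    (hmin : ∀ τ, IsPathFrom s t τ → (∀ x ∈ τ, x ∈ E) → Wt w σ ≤ Wt w τ)
    (heσ : e ∉ σ) {ρα ρβ : List (V × V)} {c : V × V} {U R P Q : List (V × V)}
    (hα : IsPathFrom s t ρα) (hβ : IsPathFrom s t ρβ)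
    (hαE : ∀ x ∈ ρα, x ∈ E) (hβE : ∀ x ∈ ρβ, x ∈ E)
    (hαnd : ρα.Nodup)
    (hσdec : σ = U ++ c :: R) (hR : ∀ x ∈ R, x ∈ ρβ → x ∈ ρα)
    (hcβ : c ∉ ρβ)
    (hαdec : ρα = P ++ c :: Q) (heQ : e ∈ Q) :
    Goal w E s t e ρα ρβ := by
  have hσsp := path_split_at (hσdec ▸ hσ)
  have hαsp := path_split_at (hαdec ▸ hα)
  refine ⟨P ++ c :: R, ρβ, path_append hαsp.1 (path_cons.mpr ⟨rfl, hσsp.2⟩), hβ, ?_, hβE, ?_, ?_⟩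
  · intro x hx
    rcases List.mem_append.mp hx with h | h
    · exact hαE x (hαdec ▸ List.mem_append_left _ h)
    · exact hσE x (hσdec ▸ List.mem_append_right _ h)
  · have hcomp : Wt w σ ≤ Wt w (U ++ c :: Q) := by
      refine hmin _ (path_append hσsp.1 (path_cons.mpr ⟨rfl, hαsp.2⟩)) ?_
      intro x hx
      rcases List.mem_append.mp hx with h | h
      · exact hσE x (hσdec ▸ List.mem_append_left _ h)
      · exact hαE x (hαdec ▸ List.mem_append_right _ h)
    rw [hσdec] at hcomp
    rw [hαdec]
    simp only [Wt_append, Wt_cons] at hcomp ⊢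
    have hβn := Wt_nonneg hw ρβ
    linarith
  · intro x hx hxβ
    have hne : x ≠ e := by
      rintro rfl
      rcases List.mem_append.mp hx with h | h
      · exact (nodup_parts (hαdec ▸ hαnd)).2.2 _ h heQ
      · rcases List.mem_cons.mp h with h | h
        · subst h
          exact heσ (hσdec ▸ List.mem_append_right _ (List.mem_cons_self (l := R)))
        · exact heσ (hσdec ▸ List.mem_append_right _ (List.mem_cons_of_mem _ h))
    rcases List.mem_append.mp hx with h | h
    · exact ⟨hαdec ▸ List.mem_append_left _ h, hxβ, hne⟩
    · rcases List.mem_cons.mp h with h | h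
      · exact absurd (h ▸ hxβ) hcβ
      · exact ⟨hR x h hxβ, hxβ, hne⟩

/-- Witness: adjacent bad pair `y` (before `e`), `z` (after `e`), same owner `ρα`. -/
lemma witness_adj_same (hw : ∀ x, 0 < w x)
    (hσ : IsPathFrom s t σ) (hσE : ∀ x ∈ σ, x ∈ E)
    (hmin : ∀ τ, IsPathFrom s t τ → (∀ x ∈ τ, x ∈ E) → Wt w σ ≤ Wt w τ)
    (heσ : e ∉ σ) {ρα ρβ : List (V × V)} {y z : V × V} {W₁ M W₂ P₁ D Q₂ : List (V × V)}
    (hα : IsPathFrom s t ρα) (hβ : IsPathFrom s t ρβ)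
    (hαE : ∀ x ∈ ρα, x ∈ E) (hβE : ∀ x ∈ ρβ, x ∈ E)
    (hαnd : ρα.Nodup)
    (hσdec : σ = W₁ ++ y :: (M ++ z :: W₂)) (hM : ∀ x ∈ M, x ∈ ρβ → x ∈ ρα)
    (hyβ : y ∉ ρβ) (hzβ : z ∉ ρβ)
    (hαdec : ρα = P₁ ++ y :: (D ++ z :: Q₂)) (heD : e ∈ D) :
    Goal w E s t e ρα ρβ := by
  have hσsp := path_split_at (hσdec ▸ hσ)
  have hσsp2 := path_split_at hσsp.2
  have hαsp := path_split_at (hαdec ▸ hα)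
  have hαsp2 := path_split_at hαsp.2
  have hnα := nodup_parts (hαdec ▸ hαnd)
  have hnα2 := nodup_parts (((List.nodup_append.mp (hαdec ▸ hαnd)).2.1).of_cons)
  have he₁ : e ∉ P₁ ++ y :: (M ++ z :: Q₂) := by
    intro hx
    rcases List.mem_append.mp hx with h | h
    · exact hnα.2.2 e h (List.mem_append_left _ heD)
    · rcases List.mem_cons.mp h with h | h
      · exact heσ (hσdec ▸ (h ▸ List.mem_append_right _ (List.mem_cons_self)))
      · rcases List.mem_append.mp h with h | h
        · exact heσ (hσdec ▸ List.mem_append_right _ (List.mem_cons_of_mem _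
            (List.mem_append_left _ h)))
        · rcases List.mem_cons.mp h with h | h
          · exact heσ (hσdec ▸ (h ▸ List.mem_append_right _ (List.mem_cons_of_mem _
              (List.mem_append_right _ (List.mem_cons_self)))))
          · exact hnα2.2.2 e heD h
  refine ⟨P₁ ++ y :: (M ++ z :: Q₂), ρβ,
    path_append hαsp.1 (path_cons.mpr ⟨rfl,
      path_append hσsp2.1 (path_cons.mpr ⟨rfl, hαsp2.2⟩)⟩), hβ, ?_, hβE, ?_, ?_⟩
  · intro x hx
    rcases List.mem_append.mp hx with h | h
    · exact hαE x (hαdec ▸ List.mem_append_left _ h)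
    · rcases List.mem_cons.mp h with h | h
      · exact hαE x (hαdec ▸ (h ▸ List.mem_append_right _ (List.mem_cons_self)))
      · rcases List.mem_append.mp h with h | h
        · exact hσE x (hσdec ▸ List.mem_append_right _ (List.mem_cons_of_mem _
            (List.mem_append_left _ h)))
        · exact hαE x (hαdec ▸ List.mem_append_right _ (List.mem_cons_of_mem _
            (List.mem_append_right _ h)))
  · -- weight
    have hcomp : Wt w σ ≤ Wt w (W₁ ++ y :: (D ++ z :: W₂)) := by
      refine hmin _ (path_append hσsp.1 (path_cons.mpr ⟨rfl,
        path_append hαsp2.1 (path_cons.mpr ⟨rfl, hσsp2.2⟩)⟩)) ?_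
      intro x hx
      rcases List.mem_append.mp hx with h | h
      · exact hσE x (hσdec ▸ List.mem_append_left _ h)
      · rcases List.mem_cons.mp h with h | h
        · exact hσE x (hσdec ▸ (h ▸ List.mem_append_right _ (List.mem_cons_self)))
        · rcases List.mem_append.mp h with h | h
          · exact hαE x (hαdec ▸ List.mem_append_right _ (List.mem_cons_of_mem _
              (List.mem_append_left _ h)))
          · exact hσE x (hσdec ▸ List.mem_append_right _ (List.mem_cons_of_mem _
              (List.mem_append_right _ h)))
    rw [hσdec] at hcomp
    rw [hαdec]
    simp only [Wt_append, Wt_cons] at hcomp ⊢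
    have hβn := Wt_nonneg hw ρβ
    linarith
  · intro x hx hxβ
    have hne : x ≠ e := fun h => he₁ (h ▸ hx)
    rcases List.mem_append.mp hx with h | h
    · exact ⟨hαdec ▸ List.mem_append_left _ h, hxβ, hne⟩
    · rcases List.mem_cons.mp h with h | h
      · exact absurd (h ▸ hxβ) hyβ
      · rcases List.mem_append.mp h with h | h
        · exact ⟨hM x h hxβ, hxβ, hne⟩
        · rcases List.mem_cons.mp h with h | h
          · exact absurd (h ▸ hxβ) hzβ
          · exact ⟨hαdec ▸ List.mem_append_right _ (List.mem_cons_of_mem _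
              (List.mem_append_right _ (List.mem_cons_of_mem _ h))), hxβ, hne⟩

/-- Witness: adjacent bad pair `y ∈ ρα` (before `e`), `z ∈ ρβ` (after `e`), different owners. -/
lemma witness_adj_diff (hw : ∀ x, 0 < w x)
    (hσ : IsPathFrom s t σ) (hσE : ∀ x ∈ σ, x ∈ E)
    (hmin : ∀ τ, IsPathFrom s t τ → (∀ x ∈ τ, x ∈ E) → Wt w σ ≤ Wt w τ)
    (heσ : e ∉ σ) {ρα ρβ : List (V × V)} {y z : V × V}
    {W₁ M W₂ P₁ Dα Cα Aβ Dβ Qβ : List (V × V)}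
    (hα : IsPathFrom s t ρα) (hβ : IsPathFrom s t ρβ)
    (hαE : ∀ x ∈ ρα, x ∈ E) (hβE : ∀ x ∈ ρβ, x ∈ E)
    (hαnd : ρα.Nodup) (hβnd : ρβ.Nodup)
    (hσdec : σ = W₁ ++ y :: (M ++ z :: W₂)) (hM : ∀ x ∈ M, x ∈ ρα ↔ x ∈ ρβ)
    (hyβ : y ∉ ρβ) (hzα : z ∉ ρα)
    (hαdec : ρα = P₁ ++ y :: (Dα ++ e :: Cα))
    (hβdec : ρβ = Aβ ++ e :: (Dβ ++ z :: Qβ)) :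
    Goal w E s t e ρα ρβ := by
  have hσsp := path_split_at (hσdec ▸ hσ)
  have hσsp2 := path_split_at hσsp.2
  have hαsp := path_split_at (hαdec ▸ hα)
  have hαsp2 := path_split_at hαsp.2
  have hβsp := path_split_at (hβdec ▸ hβ)
  have hβsp2 := path_split_at hβsp.2
  have hnα := nodup_parts (hαdec ▸ hαnd)
  have hnα2 := nodup_parts (((List.nodup_append.mp (hαdec ▸ hαnd)).2.1).of_cons)
  have hnβ := nodup_parts (hβdec ▸ hβnd)
  have hnβ2 := nodup_parts (((List.nodup_append.mp (hβdec ▸ hβnd)).2.1).of_cons)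
  -- memberships
  have hyα : y ∈ ρα := hαdec ▸ List.mem_append_right _ (List.mem_cons_self)
  have hzβ : z ∈ ρβ := hβdec ▸ List.mem_append_right _ (List.mem_cons_of_mem _
    (List.mem_append_right _ (List.mem_cons_self)))
  have he₁ : e ∉ P₁ ++ y :: (M ++ z :: Qβ) := by
    intro hx
    rcases List.mem_append.mp hx with h | h
    · exact hnα.2.2 e h (List.mem_append_right _ (List.mem_cons_self))
    · rcases List.mem_cons.mp h with h | h
      · exact heσ (hσdec ▸ (h ▸ List.mem_append_right _ (List.mem_cons_self)))
      · rcases List.mem_append.mp h with h | h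
        · exact heσ (hσdec ▸ List.mem_append_right _ (List.mem_cons_of_mem _
            (List.mem_append_left _ h)))
        · rcases List.mem_cons.mp h with h | h
          · exact heσ (hσdec ▸ (h ▸ List.mem_append_right _ (List.mem_cons_of_mem _
              (List.mem_append_right _ (List.mem_cons_self)))))
          · exact hnβ.2.1 (List.mem_append_right _ (List.mem_cons_of_mem _ h))
  refine ⟨P₁ ++ y :: (M ++ z :: Qβ), Aβ ++ e :: Cα,
    path_append hαsp.1 (path_cons.mpr ⟨rfl,
      path_append hσsp2.1 (path_cons.mpr ⟨rfl, hβsp2.2⟩)⟩),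
    path_append hβsp.1 (path_cons.mpr ⟨rfl, hαsp2.2⟩), ?_, ?_, ?_, ?_⟩
  · intro x hx
    rcases List.mem_append.mp hx with h | h
    · exact hαE x (hαdec ▸ List.mem_append_left _ h)
    · rcases List.mem_cons.mp h with h | h
      · exact hαE x (h ▸ hyα)
      · rcases List.mem_append.mp h with h | h
        · exact hσE x (hσdec ▸ List.mem_append_right _ (List.mem_cons_of_mem _
            (List.mem_append_left _ h)))
        · rcases List.mem_cons.mp h with h | h
          · exact hβE x (h ▸ hzβ)
          · exact hβE x (hβdec ▸ List.mem_append_right _ (List.mem_cons_of_mem _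
              (List.mem_append_right _ (List.mem_cons_of_mem _ h))))
  · intro x hx
    rcases List.mem_append.mp hx with h | h
    · exact hβE x (hβdec ▸ List.mem_append_left _ h)
    · rcases List.mem_cons.mp h with h | h
      · exact hβE x (hβdec ▸ (h ▸ List.mem_append_right _ (List.mem_cons_self)))
      · exact hαE x (hαdec ▸ List.mem_append_right _ (List.mem_cons_of_mem _
          (List.mem_append_right _ (List.mem_cons_of_mem _ h))))
  · -- weight
    have hcomp : Wt w σ ≤ Wt w (W₁ ++ y :: ((Dα ++ e :: Dβ) ++ z :: W₂)) := by
      refine hmin _ (path_append hσsp.1 (path_cons.mpr ⟨rfl,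
        path_append (path_append hαsp2.1 (path_cons.mpr ⟨rfl, hβsp2.1⟩))
          (path_cons.mpr ⟨rfl, hσsp2.2⟩)⟩)) ?_
      intro x hx
      rcases List.mem_append.mp hx with h | h
      · exact hσE x (hσdec ▸ List.mem_append_left _ h)
      · rcases List.mem_cons.mp h with h | h
        · exact hσE x (hσdec ▸ (h ▸ List.mem_append_right _ (List.mem_cons_self)))
        · rcases List.mem_append.mp h with h | h
          · rcases List.mem_append.mp h with h | h
            · exact hαE x (hαdec ▸ List.mem_append_right _ (List.mem_cons_of_mem _
                (List.mem_append_left _ h)))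
            · rcases List.mem_cons.mp h with h | h
              · exact hαE x (hαdec ▸ (h ▸ List.mem_append_right _ (List.mem_cons_of_mem _
                  (List.mem_append_right _ (List.mem_cons_self)))))
              · exact hβE x (hβdec ▸ List.mem_append_right _ (List.mem_cons_of_mem _
                  (List.mem_append_left _ h)))
          · rcases List.mem_cons.mp h with h | h
            · exact hβE x (h ▸ hzβ)
            · exact hσE x (hσdec ▸ List.mem_append_right _ (List.mem_cons_of_mem _
                (List.mem_append_right _ (List.mem_cons_of_mem _ h))))
    rw [hσdec] at hcomp
    rw [hαdec, hβdec]
    simp only [Wt_append, Wt_cons] at hcomp ⊢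
    linarith
  · -- intersection
    intro x hx hx'
    have hne : x ≠ e := fun h => he₁ (h ▸ hx)
    have hxρβ' : x ∈ Aβ → x ∈ ρβ := fun h => hβdec ▸ List.mem_append_left _ h
    have hxCα : x ∈ Cα → x ∈ ρα := fun h => hαdec ▸ List.mem_append_right _
      (List.mem_cons_of_mem _ (List.mem_append_right _ (List.mem_cons_of_mem _ h)))
    rcases List.mem_append.mp hx' with hB | hB
    · -- x ∈ Aβ
      have hxβ : x ∈ ρβ := hxρβ' hB
      rcases List.mem_append.mp hx with h | h
      · exact ⟨hαdec ▸ List.mem_append_left _ h, hxβ, hne⟩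
      · rcases List.mem_cons.mp h with h | h
        · exact absurd (h ▸ hxβ) hyβ
        · rcases List.mem_append.mp h with h | h
          · exact ⟨(hM x h).mpr hxβ, hxβ, hne⟩
          · rcases List.mem_cons.mp h with h | h
            · exact absurd (h ▸ hB) (fun hc => hnβ.2.2 z hc
                (List.mem_append_right _ (List.mem_cons_self)))
            · exact absurd hB (fun hc => hnβ.2.2 x hc
                (List.mem_append_right _ (List.mem_cons_of_mem _ h)))
    · rcases List.mem_cons.mp hB with hB | hB
      · exact absurd hB hne
      · -- x ∈ Cα
        have hxα : x ∈ ρα := hxCα hB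
        rcases List.mem_append.mp hx with h | h
        · exact absurd hB (fun hc => hnα.2.2 x h
            (List.mem_append_right _ (List.mem_cons_of_mem _ hc)))
        · rcases List.mem_cons.mp h with h | h
          · exact absurd hB (fun hc => hnα.2.1 (h ▸ List.mem_append_right _
              (List.mem_cons_of_mem _ hc)))
          · rcases List.mem_append.mp h with h | h
            · exact ⟨hxα, (hM x h).mp hxα, hne⟩
            · rcases List.mem_cons.mp h with h | h
              · exact absurd (h ▸ hxα) hzα
              · exact ⟨hxα, hβdec ▸ List.mem_append_right _ (List.mem_cons_of_mem _
                  (List.mem_append_right _ (List.mem_cons_of_mem _ h))), hne⟩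

lemma bridge_W4 (hw : ∀ x, 0 < w x)
    (hσ : IsPathFrom s t σ) (hσE : ∀ x ∈ σ, x ∈ E)
    (hmin : ∀ τ, IsPathFrom s t τ → (∀ x ∈ τ, x ∈ E) → Wt w σ ≤ Wt w τ)
    (heσ : e ∉ σ) {ρα ρβ : List (V × V)} {z : V × V} {W₁ W₂ : List (V × V)}
    (hα : IsPathFrom s t ρα) (hβ : IsPathFrom s t ρβ)
    (hαE : ∀ x ∈ ρα, x ∈ E) (hβE : ∀ x ∈ ρβ, x ∈ E)
    (hαnd : ρα.Nodup)
    (hσdec : σ = W₁ ++ z :: W₂) (hW₁ : ∀ x ∈ W₁, x ∈ ρβ → x ∈ ρα)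
    (hzβ : z ∉ ρβ) (haf : AfterIn ρα e z) :
    Goal w E s t e ρα ρβ := by
  obtain ⟨P', Q', hd, hzQ'⟩ := haf
  obtain ⟨P'', Q'', hQ'⟩ := List.append_of_mem hzQ'
  refine witness_W4 hw hσ hσE hmin heσ hα hβ hαE hβE hαnd hσdec hW₁ hzβ
    (P := P' ++ e :: P'') (Q := Q'') ?_ ?_
  · rw [hd, hQ']; simp [List.append_assoc]
  · exact List.mem_append_right _ (List.mem_cons_self)

lemma bridge_W5 (hw : ∀ x, 0 < w x)
    (hσ : IsPathFrom s t σ) (hσE : ∀ x ∈ σ, x ∈ E)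
    (hmin : ∀ τ, IsPathFrom s t τ → (∀ x ∈ τ, x ∈ E) → Wt w σ ≤ Wt w τ)
    (heσ : e ∉ σ) {ρα ρβ : List (V × V)} {c : V × V} {U R : List (V × V)}
    (hα : IsPathFrom s t ρα) (hβ : IsPathFrom s t ρβ)
    (hαE : ∀ x ∈ ρα, x ∈ E) (hβE : ∀ x ∈ ρβ, x ∈ E)
    (hαnd : ρα.Nodup)
    (hσdec : σ = U ++ c :: R) (hR : ∀ x ∈ R, x ∈ ρβ → x ∈ ρα)
    (hcβ : c ∉ ρβ) (haf : AfterIn ρα c e) :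
    Goal w E s t e ρα ρβ := by
  obtain ⟨P, Q, hd, heQ⟩ := haf
  exact witness_W5 hw hσ hσE hmin heσ hα hβ hαE hβE hαnd hσdec hR hcβ hd heQ

lemma bridge_adj_same (hw : ∀ x, 0 < w x)
    (hσ : IsPathFrom s t σ) (hσE : ∀ x ∈ σ, x ∈ E)
    (hmin : ∀ τ, IsPathFrom s t τ → (∀ x ∈ τ, x ∈ E) → Wt w σ ≤ Wt w τ)
    (heσ : e ∉ σ) {ρα ρβ : List (V × V)} {y z : V × V} {W₁ M W₂ : List (V × V)}
    (hα : IsPathFrom s t ρα) (hβ : IsPathFrom s t ρβ)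
    (hαE : ∀ x ∈ ρα, x ∈ E) (hβE : ∀ x ∈ ρβ, x ∈ E)
    (hαnd : ρα.Nodup)
    (hσdec : σ = W₁ ++ y :: (M ++ z :: W₂)) (hM : ∀ x ∈ M, x ∈ ρβ → x ∈ ρα)
    (hyβ : y ∉ ρβ) (hzβ : z ∉ ρβ)
    (hafy : AfterIn ρα y e) (hafz : AfterIn ρα e z) :
    Goal w E s t e ρα ρβ := by
  have hez : e ≠ z := fun h =>
    heσ (h ▸ hσdec ▸ List.mem_append_right _ (List.mem_cons_of_mem _
      (List.mem_append_right _ (List.mem_cons_self))))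
  obtain ⟨P₁, Qy, hd, heQy⟩ := hafy
  have hyz : AfterIn ρα y z := afterIn_trans hαnd ⟨P₁, Qy, hd, heQy⟩ hafz
  have hzQy : z ∈ Qy := afterIn_suffix hαnd hyz hd
  obtain ⟨D, Q₂, hQy⟩ := List.append_of_mem hzQy
  have heD : e ∈ D := by
    have heQy' : e ∈ D ++ z :: Q₂ := hQy ▸ heQy
    rcases List.mem_append.mp heQy' with h | h
    · exact h
    · rcases List.mem_cons.mp h with h | h
      · exact absurd h hez
      · exact (afterIn_asymm hαnd hafz
          ⟨P₁ ++ y :: D, Q₂, by rw [hd, hQy]; simp [List.append_assoc], h⟩).elim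
  exact witness_adj_same hw hσ hσE hmin heσ hα hβ hαE hβE hαnd hσdec hM hyβ hzβ
    (by rw [hd, hQy]) heD

lemma bridge_adj_diff (hw : ∀ x, 0 < w x)
    (hσ : IsPathFrom s t σ) (hσE : ∀ x ∈ σ, x ∈ E)
    (hmin : ∀ τ, IsPathFrom s t τ → (∀ x ∈ τ, x ∈ E) → Wt w σ ≤ Wt w τ)
    (heσ : e ∉ σ) {ρα ρβ : List (V × V)} {y z : V × V} {W₁ M W₂ : List (V × V)}
    (hα : IsPathFrom s t ρα) (hβ : IsPathFrom s t ρβ)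
    (hαE : ∀ x ∈ ρα, x ∈ E) (hβE : ∀ x ∈ ρβ, x ∈ E)
    (hαnd : ρα.Nodup) (hβnd : ρβ.Nodup)
    (hσdec : σ = W₁ ++ y :: (M ++ z :: W₂)) (hM : ∀ x ∈ M, x ∈ ρα ↔ x ∈ ρβ)
    (hyβ : y ∉ ρβ) (hzα : z ∉ ρα)
    (hafy : AfterIn ρα y e) (hafz : AfterIn ρβ e z) :
    Goal w E s t e ρα ρβ := by
  obtain ⟨P₁, Qy, hd, heQy⟩ := hafy
  obtain ⟨Dα, Cα, hQy⟩ := List.append_of_mem heQy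
  obtain ⟨Aβ, Qe, hd2, hzQe⟩ := hafz
  obtain ⟨Dβ, Qβ, hQe⟩ := List.append_of_mem hzQe
  exact witness_adj_diff hw hσ hσE hmin heσ hα hβ hαE hβE hαnd hβnd hσdec hM hyβ hzα
    (by rw [hd, hQy]) (by rw [hd2, hQe])

end Witnesses
end CTAux

namespace CTAux
set_option linter.unusedSectionVars false
set_option maxHeartbeats 1000000
open CTAux2

variable {V : Type*} [DecidableEq V]
variable {w : V × V → ℝ} {E : Finset (V × V)} {s t : V} {e : V × V} {σ : List (V × V)}

/-- A weight-minimal path has no repeated edges. -/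
lemma min_nodup (hw : ∀ x, 0 < w x)
    (hσ : IsPathFrom s t σ) (hσE : ∀ x ∈ σ, x ∈ E)
    (hmin : ∀ τ, IsPathFrom s t τ → (∀ x ∈ τ, x ∈ E) → Wt w σ ≤ Wt w τ) :
    σ.Nodup := by
  by_contra hnd
  obtain ⟨P, x, M, Q, hdec⟩ := dup_decomp hnd
  have hsp := path_split_at (hdec ▸ hσ)
  have hsp2 := path_split_at hsp.2
  have hτ : IsPathFrom s t (P ++ x :: Q) :=
    path_append hsp.1 (path_cons.mpr ⟨rfl, hsp2.2⟩)
  have hτE : ∀ y ∈ P ++ x :: Q, y ∈ E := by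
    intro y hy
    rcases List.mem_append.mp hy with h | h
    · exact hσE y (hdec ▸ List.mem_append_left _ h)
    · exact hσE y (hdec ▸ List.mem_append_right _ (by
        rcases List.mem_cons.mp h with h | h
        · exact h ▸ List.mem_cons_self
        · exact List.mem_cons_of_mem _ (List.mem_append_right _
            (List.mem_cons_of_mem _ h))))
  have := hmin _ hτ hτE
  rw [hdec] at this
  simp only [Wt_append, Wt_cons] at this
  have hMn := Wt_nonneg hw M
  have hx := hw x
  linarith

/-- Excision of a repeated edge from a path. -/
lemma excise (hw : ∀ x, 0 < w x) {ρ : List (V × V)}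
    (h : IsPathFrom s t ρ) (hnd : ¬ ρ.Nodup) :
    ∃ ρ', IsPathFrom s t ρ' ∧ ρ'.length < ρ.length ∧ (∀ x ∈ ρ', x ∈ ρ) ∧
      Wt w ρ' ≤ Wt w ρ := by
  obtain ⟨P, x, M, Q, hdec⟩ := dup_decomp hnd
  have hsp := path_split_at (hdec ▸ h)
  have hsp2 := path_split_at hsp.2
  refine ⟨P ++ x :: Q, path_append hsp.1 (path_cons.mpr ⟨rfl, hsp2.2⟩), ?_, ?_, ?_⟩
  · rw [hdec]; simp
  · intro y hy
    rw [hdec]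
    rcases List.mem_append.mp hy with h' | h'
    · exact List.mem_append_left _ h'
    · refine List.mem_append_right _ ?_
      rcases List.mem_cons.mp h' with h' | h'
      · exact h' ▸ List.mem_cons_self
      · exact List.mem_cons_of_mem _ (List.mem_append_right _ (List.mem_cons_of_mem _ h'))
  · rw [hdec]
    simp only [Wt_append, Wt_cons]
    have := Wt_nonneg hw M
    have := hw x
    linarith

/-- Main structural lemma: given a shortest path `σ` avoiding `e`, any pair of
paths both containing `e` can be replaced by a pair whose common edges are
common edges of the original pair other than `e`, at no extra total weight. -/
lemma main_induction (hw : ∀ x, 0 < w x)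
    (hσ : IsPathFrom s t σ) (hσE : ∀ x ∈ σ, x ∈ E)
    (hmin : ∀ τ, IsPathFrom s t τ → (∀ x ∈ τ, x ∈ E) → Wt w σ ≤ Wt w τ)
    (heσ : e ∉ σ) :
    ∀ (n : ℕ) (ρ₁ ρ₂ : List (V × V)), ρ₁.length + ρ₂.length ≤ n →
      IsPathFrom s t ρ₁ → IsPathFrom s t ρ₂ →
      (∀ x ∈ ρ₁, x ∈ E) → (∀ x ∈ ρ₂, x ∈ E) → e ∈ ρ₁ → e ∈ ρ₂ →
      Goal w E s t e ρ₁ ρ₂ := by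
  intro n
  induction n with
  | zero =>
    intro ρ₁ ρ₂ hlen h₁ _ _ _ he₁ _
    have : ρ₁ = [] := List.length_eq_zero_iff.mp (by omega)
    exact absurd (this ▸ he₁) (List.not_mem_nil)
  | succ n IH =>
    intro ρ₁ ρ₂ hlen h₁ h₂ h₁E h₂E he₁ he₂
    by_cases hnd₁ : ρ₁.Nodup
    swap
    · obtain ⟨ρ', hp', hlen', hsub', hW'⟩ := excise hw h₁ hnd₁
      by_cases he' : e ∈ ρ'
      · obtain ⟨τ₁, τ₂, a1, a2, a3, a4, a5, a6⟩ :=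
          IH ρ' ρ₂ (by omega) hp' h₂ (fun x hx => h₁E x (hsub' x hx)) h₂E he' he₂
        exact ⟨τ₁, τ₂, a1, a2, a3, a4, by linarith, fun x hx hx' =>
          ⟨hsub' x (a6 x hx hx').1, (a6 x hx hx').2.1, (a6 x hx hx').2.2⟩⟩
      · exact ⟨ρ', ρ₂, hp', h₂, (fun x hx => h₁E x (hsub' x hx)), h₂E, by linarith,
          fun x hx hx' => ⟨hsub' x hx, hx', fun hc => he' (hc ▸ hx)⟩⟩
    by_cases hnd₂ : ρ₂.Nodup
    swap
    · obtain ⟨ρ', hp', hlen', hsub', hW'⟩ := excise hw h₂ hnd₂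
      by_cases he' : e ∈ ρ'
      · obtain ⟨τ₁, τ₂, a1, a2, a3, a4, a5, a6⟩ :=
          IH ρ₁ ρ' (by omega) h₁ hp' h₁E (fun x hx => h₂E x (hsub' x hx)) he₁ he'
        exact ⟨τ₁, τ₂, a1, a2, a3, a4, by linarith, fun x hx hx' =>
          ⟨(a6 x hx hx').1, hsub' x (a6 x hx hx').2.1, (a6 x hx hx').2.2⟩⟩
      · exact ⟨ρ₁, ρ', h₁, hp', h₁E, (fun x hx => h₂E x (hsub' x hx)), by linarith,
          fun x hx hx' => ⟨hx, hsub' x hx', fun hc => he' (hc ▸ hx')⟩⟩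
    -- both Nodup
    by_cases hs₁ : ∀ x ∈ σ, x ∈ ρ₁ → x ∈ ρ₂
    · exact witness_sigma hw hσ hσE hmin heσ h₁ h₂ h₁E h₂E hs₁
    by_cases hs₂ : ∀ x ∈ σ, x ∈ ρ₂ → x ∈ ρ₁
    · exact Goal.symm (witness_sigma hw hσ hσE hmin heσ h₂ h₁ h₂E h₁E hs₂)
    push_neg at hs₁ hs₂
    set Bad : V × V → Prop := fun x => (x ∈ ρ₁ ∧ x ∉ ρ₂) ∨ (x ∈ ρ₂ ∧ x ∉ ρ₁) with hBad
    set isA : V × V → Prop := fun x =>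
      (x ∈ ρ₁ ∧ x ∉ ρ₂ ∧ AfterIn ρ₁ x e) ∨ (x ∈ ρ₂ ∧ x ∉ ρ₁ ∧ AfterIn ρ₂ x e) with hisA
    set isC : V × V → Prop := fun x =>
      (x ∈ ρ₁ ∧ x ∉ ρ₂ ∧ AfterIn ρ₁ e x) ∨ (x ∈ ρ₂ ∧ x ∉ ρ₁ ∧ AfterIn ρ₂ e x) with hisC
    have hcls : ∀ x, Bad x → isA x ∨ isC x := by
      intro x hbx
      rcases hbx with ⟨hx1, hx2⟩ | ⟨hx1, hx2⟩
      · have hxe : x ≠ e := fun h => hx2 (h ▸ he₂)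
        rcases afterIn_total hx1 he₁ hxe with h | h
        · exact Or.inl (Or.inl ⟨hx1, hx2, h⟩)
        · exact Or.inr (Or.inl ⟨hx1, hx2, h⟩)
      · have hxe : x ≠ e := fun h => hx2 (h ▸ he₁)
        rcases afterIn_total hx1 he₂ hxe with h | h
        · exact Or.inl (Or.inr ⟨hx1, hx2, h⟩)
        · exact Or.inr (Or.inr ⟨hx1, hx2, h⟩)
    by_cases hC : ∃ z ∈ σ, Bad z ∧ isC z
    · rcases scan_adjacent σ hC hcls with
        ⟨W₁, y, M, z, W₂, hdec, hby, hAy, hbz, hCz, hM⟩ | ⟨W₁, z, W₂, hdec, hbz, hCz, hW₁⟩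
      · -- adjacent pair
        have hM₁ : ∀ x ∈ M, x ∈ ρ₂ → x ∈ ρ₁ := fun x hx hx2 => by
          by_contra hx1; exact hM x hx (Or.inr ⟨hx2, hx1⟩)
        have hM₂ : ∀ x ∈ M, x ∈ ρ₁ → x ∈ ρ₂ := fun x hx hx1 => by
          by_contra hx2; exact hM x hx (Or.inl ⟨hx1, hx2⟩)
        have hMiff : ∀ x ∈ M, x ∈ ρ₁ ↔ x ∈ ρ₂ := fun x hx => ⟨hM₂ x hx, hM₁ x hx⟩
        rcases hAy with ⟨hy1, hy2, hafy⟩ | ⟨hy1, hy2, hafy⟩ <;>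
          rcases hCz with ⟨hz1, hz2, hafz⟩ | ⟨hz1, hz2, hafz⟩
        · exact bridge_adj_same hw hσ hσE hmin heσ h₁ h₂ h₁E h₂E hnd₁ hdec hM₁
            hy2 hz2 hafy hafz
        · exact bridge_adj_diff hw hσ hσE hmin heσ h₁ h₂ h₁E h₂E hnd₁ hnd₂ hdec hMiff
            hy2 hz2 hafy hafz
        · exact Goal.symm (bridge_adj_diff hw hσ hσE hmin heσ h₂ h₁ h₂E h₁E hnd₂ hnd₁
            hdec (fun x hx => (hMiff x hx).symm) hy2 hz2 hafy hafz)
        · exact Goal.symm (bridge_adj_same hw hσ hσE hmin heσ h₂ h₁ h₂E h₁E hnd₂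
            hdec hM₂ hy2 hz2 hafy hafz)
      · -- σ-first bad is of type C
        have hW₁' : ∀ x ∈ W₁, x ∈ ρ₂ → x ∈ ρ₁ := fun x hx hx2 => by
          by_contra hx1; exact hW₁ x hx (Or.inr ⟨hx2, hx1⟩)
        have hW₁'' : ∀ x ∈ W₁, x ∈ ρ₁ → x ∈ ρ₂ := fun x hx hx1 => by
          by_contra hx2; exact hW₁ x hx (Or.inl ⟨hx1, hx2⟩)
        rcases hCz with ⟨hz1, hz2, hafz⟩ | ⟨hz1, hz2, hafz⟩
        · exact bridge_W4 hw hσ hσE hmin heσ h₁ h₂ h₁E h₂E hnd₁ hdec hW₁' hz2 hafz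
        · exact Goal.symm (bridge_W4 hw hσ hσE hmin heσ h₂ h₁ h₂E h₁E hnd₂ hdec
            hW₁'' hz2 hafz)
    · -- no C-type bads: use σ-last bad, of type A
      obtain ⟨x₀, hx₀σ, hx₀1, hx₀2⟩ := hs₁
      obtain ⟨U, c, R, hdec, hbc, hR⟩ :=
        last_bad (bad := Bad) σ ⟨x₀, hx₀σ, Or.inl ⟨hx₀1, hx₀2⟩⟩
      have hcσ : c ∈ σ := hdec ▸ List.mem_append_right _ (List.mem_cons_self)
      have hAc : isA c := by
        rcases hcls c hbc with h | h
        · exact h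
        · exact absurd ⟨c, hcσ, hbc, h⟩ hC
      have hR' : ∀ x ∈ R, x ∈ ρ₂ → x ∈ ρ₁ := fun x hx hx2 => by
        by_contra hx1; exact hR x hx (Or.inr ⟨hx2, hx1⟩)
      have hR'' : ∀ x ∈ R, x ∈ ρ₁ → x ∈ ρ₂ := fun x hx hx1 => by
        by_contra hx2; exact hR x hx (Or.inl ⟨hx1, hx2⟩)
      rcases hAc with ⟨hc1, hc2, hafc⟩ | ⟨hc1, hc2, hafc⟩
      · exact bridge_W5 hw hσ hσE hmin heσ h₁ h₂ h₁E h₂E hnd₁ hdec hR' hc2 hafc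
      · exact Goal.symm (bridge_W5 hw hσ hσE hmin heσ h₂ h₁ h₂E h₁E hnd₂ hdec
          hR'' hc2 hafc)
end CTAux

/-- If `(π₁, π₂)` optimally solves the CT-Constrained QoS Max-Survivability
problem with QoS bound `B` (it is feasible and its survivability level
`∏_{e ∈ π₁ ∩ π₂} (1 - p e)` is maximal among feasible connections), then every
critical link of `(π₁, π₂)` lies on every weight-shortest path from `s` to `t`. -/
theorem ct_cqms_critical_links_in_all_shortest_paths {V : Type*} [DecidableEq V]
    (E : Finset (V × V)) (w p : V × V → ℝ)
    (hw : ∀ e, 0 < w e) (hp : ∀ e, 0 < p e ∧ p e < 1)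
    (s t : V) (B : ℝ) (π₁ π₂ : List (V × V))
    (h₁ : IsPathFrom s t π₁) (h₂ : IsPathFrom s t π₂)
    (h₁E : ∀ e ∈ π₁, e ∈ E) (h₂E : ∀ e ∈ π₂, e ∈ E)
    (hB : (π₁.map w).sum + (π₂.map w).sum ≤ B)
    (hopt : ∀ τ₁ τ₂ : List (V × V), IsPathFrom s t τ₁ → IsPathFrom s t τ₂ →
      (∀ e ∈ τ₁, e ∈ E) → (∀ e ∈ τ₂, e ∈ E) →
      (τ₁.map w).sum + (τ₂.map w).sum ≤ B →
      ∏ e ∈ τ₁.toFinset ∩ τ₂.toFinset, (1 - p e) ≤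
        ∏ e ∈ π₁.toFinset ∩ π₂.toFinset, (1 - p e)) :
    ∀ e ∈ π₁.toFinset ∩ π₂.toFinset,
      ∀ σ : List (V × V), IsPathFrom s t σ → (∀ e' ∈ σ, e' ∈ E) →
        (∀ τ : List (V × V), IsPathFrom s t τ → (∀ e' ∈ τ, e' ∈ E) →
          (σ.map w).sum ≤ (τ.map w).sum) →
        e ∈ σ := by
  intro e he σ hσpath hσE hσmin
  rw [Finset.mem_inter, List.mem_toFinset, List.mem_toFinset] at he
  by_contra heσ
  have hmin' : ∀ τ, IsPathFrom s t τ → (∀ x ∈ τ, x ∈ E) →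
      CTAux.Wt w σ ≤ CTAux.Wt w τ := fun τ h hE => hσmin τ h hE
  obtain ⟨τ₁, τ₂, a1, a2, a3, a4, a5, a6⟩ :=
    CTAux.main_induction hw hσpath hσE hmin' heσ
      (π₁.length + π₂.length) π₁ π₂ le_rfl h₁ h₂ h₁E h₂E he.1 he.2
  have a5' : (τ₁.map w).sum + (τ₂.map w).sum ≤
      (π₁.map w).sum + (π₂.map w).sum := a5
  have hfeas : (τ₁.map w).sum + (τ₂.map w).sum ≤ B := le_trans a5' hB
  have hle := hopt τ₁ τ₂ a1 a2 a3 a4 hfeas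
  set S := π₁.toFinset ∩ π₂.toFinset with hS
  set K := τ₁.toFinset ∩ τ₂.toFinset with hK
  have hKsub : K ⊆ S.erase e := by
    intro x hx
    rw [hK, Finset.mem_inter, List.mem_toFinset, List.mem_toFinset] at hx
    obtain ⟨hx1, hx2, hx3⟩ := a6 x hx.1 hx.2
    rw [Finset.mem_erase]
    exact ⟨hx3, Finset.mem_inter.mpr ⟨List.mem_toFinset.mpr hx1,
      List.mem_toFinset.mpr hx2⟩⟩
  have hf0 : ∀ x : V × V, (0:ℝ) < 1 - p x := fun x => by have := (hp x).2; linarith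
  have hf1 : ∀ x : V × V, (1:ℝ) - p x < 1 := fun x => by have := (hp x).1; linarith
  have heS : e ∈ S := Finset.mem_inter.mpr
    ⟨List.mem_toFinset.mpr he.1, List.mem_toFinset.mpr he.2⟩
  have hprod : ∏ x ∈ S, (1 - p x) = (1 - p e) * ∏ x ∈ S.erase e, (1 - p x) :=
    (Finset.mul_prod_erase S _ heS).symm
  have hKn : (0:ℝ) ≤ ∏ x ∈ K, (1 - p x) := Finset.prod_nonneg fun i _ => (hf0 i).le
  have h1 : ∏ x ∈ S.erase e, (1 - p x) ≤ ∏ x ∈ K, (1 - p x) := by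
    calc ∏ x ∈ S.erase e, (1 - p x)
        = (∏ x ∈ S.erase e \ K, (1 - p x)) * ∏ x ∈ K, (1 - p x) :=
          (Finset.prod_sdiff hKsub).symm
      _ ≤ 1 * ∏ x ∈ K, (1 - p x) := by
          refine mul_le_mul_of_nonneg_right ?_ hKn
          exact Finset.prod_le_one (fun i _ => (hf0 i).le) (fun i _ => (hf1 i).le)
      _ = ∏ x ∈ K, (1 - p x) := one_mul _
  have hpos : (0:ℝ) < ∏ x ∈ S.erase e, (1 - p x) :=
    Finset.prod_pos fun i _ => hf0 i
  have h2 : ∏ x ∈ S, (1 - p x) < ∏ x ∈ S.erase e, (1 - p x) := by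
    rw [hprod]
    nlinarith [hf1 e, hpos]
  linarith [h1, h2, hle]
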